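/- Let Γ₁ be a finite graph of valency at least 2 and let ℓ ≥ 2. Then the ℓ-th direct (tensor) power Γ = Γ₁^ℓ is not (G,2)-arc-transitive for any group G contained in the wreath product Aut(Γ₁) wr Sym(ℓ) acting in product action on the vertex set. Concretely: there exist two neighbors β, β′ of a diagonal vertex α = (α₁,...,α₁) such that no element of the stabilizer of α in (Aut Γ₁)_{α₁} wr Sym(ℓ) fixing a common neighbor β₀ maps β to β′, so the stabilizer is not 2-transitive on the neighborhood of α. -/

import Mathlib

/-- The direct (tensor) power of a graph: vertices are `ℓ`-tuples, and two distinct tuples are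
adjacent iff they are adjacent in every coordinate. -/
def tensorPow {V : Type*} (Γ₁ : SimpleGraph V) (ℓ : ℕ) : SimpleGraph (Fin ℓ → V) where
  Adj f g := f ≠ g ∧ ∀ i, Γ₁.Adj (f i) (g i)
  symm := ⟨fun f g h => ⟨h.1.symm, fun i => (h.2 i).symm⟩⟩
  loopless := ⟨fun f h => h.1 rfl⟩

/-- the `ℓ`-th direct power of a graph of valency at least `2` is not
`(G,2)`-arc-transitive for `G` inside the wreath product `Aut(Γ₁) wr Sym(ℓ)` in product action:
for the diagonal vertex `α = (α₁,…,α₁)` there are neighbors `β, β'` of `α` such that no element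
of the product-action wreath product whose components are automorphisms of `Γ₁` fixing `α₁` and
fixing the common neighbor data `β₁` maps `β` to `β'`; hence the stabilizer of `α` is not
`2`-transitive on the neighborhood of `α`. -/
theorem stmt_2 {V : Type*} [Fintype V] (Γ₁ : SimpleGraph V) (ℓ : ℕ) (hℓ : 2 ≤ ℓ)
    (α₁ β₁ β₂ : V) (h1 : Γ₁.Adj α₁ β₁) (h2 : Γ₁.Adj α₁ β₂) (hne : β₁ ≠ β₂) :
    ∃ β β' : Fin ℓ → V,
      β = (fun j => if ((j : Fin ℓ) : ℕ) = ℓ - 1 then β₂ else β₁) ∧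
      β' = (fun j => if ℓ - 2 ≤ ((j : Fin ℓ) : ℕ) then β₂ else β₁) ∧
      (tensorPow Γ₁ ℓ).Adj (fun _ => α₁) β ∧
      (tensorPow Γ₁ ℓ).Adj (fun _ => α₁) β' ∧
      β ≠ β' ∧
      ¬ ∃ (h : Fin ℓ → Equiv.Perm V) (σ : Equiv.Perm (Fin ℓ)),
          (∀ i, (∀ a b : V, Γ₁.Adj a b → Γ₁.Adj (h i a) (h i b)) ∧
            h i α₁ = α₁ ∧ h i β₁ = β₁) ∧
          (∀ i, h (σ⁻¹ i) (β (σ⁻¹ i)) = β' i) := by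
  set β : Fin ℓ → V := fun j => if ((j : Fin ℓ) : ℕ) = ℓ - 1 then β₂ else β₁ with hβ
  set β' : Fin ℓ → V := fun j => if ℓ - 2 ≤ ((j : Fin ℓ) : ℕ) then β₂ else β₁ with hβ'
  have i₁ : Fin ℓ := ⟨ℓ - 1, by omega⟩
  refine ⟨β, β', rfl, rfl, ?_, ?_, ?_, ?_⟩
  · show (fun _ => α₁) ≠ β ∧ ∀ i, Γ₁.Adj α₁ (β i)
    refine ⟨fun hc => ?_, fun i => ?_⟩
    · have := congrFun hc ⟨ℓ - 1, by omega⟩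
      simp [hβ] at this
      exact h2.ne this
    · by_cases hi : ((i : Fin ℓ) : ℕ) = ℓ - 1 <;> simp [hβ, hi, h1, h2]
  · show (fun _ => α₁) ≠ β' ∧ ∀ i, Γ₁.Adj α₁ (β' i)
    refine ⟨fun hc => ?_, fun i => ?_⟩
    · have := congrFun hc ⟨ℓ - 1, by omega⟩
      simp [hβ'] at this
      rw [if_pos (by omega)] at this
      exact h2.ne this
    · show Γ₁.Adj α₁ (if ℓ - 2 ≤ (i : ℕ) then β₂ else β₁)
      split
      exacts [h2, h1]
  · intro hc
    have := congrFun hc ⟨ℓ - 2, by omega⟩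
    simp only [hβ, hβ'] at this
    rw [if_neg (by omega), if_pos (by omega)] at this
    exact hne this
  · rintro ⟨h, σ, hcomp, hmap⟩
    have key : ∀ i : Fin ℓ, β' i = β₂ → ((σ⁻¹ i : Fin ℓ) : ℕ) = ℓ - 1 := by
      intro i hi
      have hm := hmap i
      rw [hi] at hm
      by_contra hσ
      have : β (σ⁻¹ i) = β₁ := by exact if_neg hσ
      rw [this, (hcomp (σ⁻¹ i)).2.2] at hm
      exact hne hm
    have e1 : β' ⟨ℓ - 1, by omega⟩ = β₂ := if_pos (by simp; omega)
    have e2 : β' ⟨ℓ - 2, by omega⟩ = β₂ := if_pos (by simp)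
    have k1 := key _ e1
    have k2 := key _ e2
    have : σ⁻¹ ⟨ℓ - 1, by omega⟩ = σ⁻¹ ⟨ℓ - 2, by omega⟩ := Fin.ext (by omega)
    have := σ⁻¹.injective this
    have := Fin.mk.injEq (ℓ-1) (by omega : ℓ - 1 < ℓ) (ℓ-2) (by omega) ▸ this
    omega
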